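/- Accepted moves strictly increase modularity, so modularity is monotonically increasing over the iterations: under the setup of the single-vertex move (finite undirected weighted graph with nonnegative weights, W > 0, partition S, vertex i moved from C(i) to community D), if the modularity gain ΔQ_{i→D} = (e_{i→D} − e_{i→C(i)∖{i}})/W + δᵢ·(deg_{C(i)∖{i}} − deg_D)/(2W²) is strictly positive, then the new partition S′ obtained by the move satisfies Q(S′) > Q(S). -/

import Mathlib

open Finset

/-- accepted moves strictly increase modularity.  Under the setup of the
single-vertex move (symmetric nonnegative weights, `W > 0`, partition `S`, vertex `i`
moved from its community `Ci = C(i)` to a community `D`), if the modularity gain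
`ΔQ_{i→D} = (e_{i→D} − e_{i→C(i)∖{i}})/W + δ i·(deg_{C(i)∖{i}} − deg_D)/(2W²)` is
strictly positive, then the new partition `S'` satisfies `Q(S') > Q(S)`. -/
theorem modularity_strict_increase_of_positive_gain {V : Type*} [Fintype V] [DecidableEq V]
    (w : V → V → ℝ)
    (hsymm : ∀ a b : V, w a b = w b a)
    (hnonneg : ∀ a b : V, 0 ≤ w a b)
    (δ : V → ℝ) (hδ : ∀ a : V, δ a = ∑ b, w a b)
    (W : ℝ) (hW : 2 * W = ∑ a, δ a) (hWpos : 0 < W)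
    (S : Finset (Finset V))
    (hcover : ∀ v : V, ∃ C ∈ S, v ∈ C)
    (hdisj : ∀ C ∈ S, ∀ C' ∈ S, C ≠ C' → Disjoint C C')
    (hne : ∀ C ∈ S, C.Nonempty)
    (i : V) (Ci : Finset V) (hCiS : Ci ∈ S) (hiCi : i ∈ Ci)
    (D : Finset V) (hD : D ∈ S ∨ D = ∅) (hiD : i ∉ D)
    (S' : Finset (Finset V))
    (hS' : S' = insert (Ci \ {i}) (insert (D ∪ {i}) (S \ {Ci, D})))
    (c : V → Finset V) (hc : ∀ v : V, c v ∈ S ∧ v ∈ c v)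
    (c' : V → Finset V) (hc' : ∀ v : V, c' v ∈ S' ∧ v ∈ c' v)
    (hgain : 0 < ((∑ j ∈ D, w i j) - ∑ j ∈ Ci \ {i}, w i j) / W
      + δ i * ((∑ v ∈ Ci \ {i}, δ v) - ∑ v ∈ D, δ v) / (2 * W ^ 2)) :
    (1 / (2 * W)) * (∑ v, ∑ j ∈ c v, w v j)
        - ∑ C ∈ S, ((∑ v ∈ C, δ v) / (2 * W)) ^ 2
      < (1 / (2 * W)) * (∑ v, ∑ j ∈ c' v, w v j)
        - ∑ C ∈ S', ((∑ v ∈ C, δ v) / (2 * W)) ^ 2 := by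
  classical
  set A : Finset V := Ci \ {i} with hAdef
  set B : Finset V := D ∪ {i} with hBdef
  set T : Finset (Finset V) := S \ {Ci, D} with hTdef
  have hiA : i ∉ A := by simp [hAdef]
  have hiB : i ∈ B := by simp [hBdef]
  have hAsub : A ⊆ Ci := Finset.sdiff_subset
  -- Ci and D are disjoint
  have hCiD : Disjoint Ci D := by
    rcases hD with h | h
    · exact hdisj Ci hCiS D h (fun e => hiD (e ▸ hiCi))
    · simp [h]
  -- uniqueness of containing community in S
  have huniq : ∀ v C, C ∈ S → v ∈ C → c v = C := by
    intro v C hCS hvC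
    by_contra hne'
    exact (Finset.disjoint_left.mp (hdisj (c v) (hc v).1 C hCS hne')) (hc v).2 hvC
  have hci : c i = Ci := huniq i Ci hCiS hiCi
  -- membership of c' v in the three parts
  have hc'mem : ∀ v, c' v = A ∨ c' v = B ∨ (c' v ∈ S ∧ c' v ≠ Ci ∧ c' v ≠ D) := by
    intro v
    have := (hc' v).1
    rw [hS'] at this
    rcases Finset.mem_insert.mp this with h | h
    · exact Or.inl h
    rcases Finset.mem_insert.mp h with h | h
    · exact Or.inr (Or.inl h)
    · rcases Finset.mem_sdiff.mp h with ⟨h1, h2⟩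
      simp only [Finset.mem_insert, Finset.mem_singleton] at h2
      exact Or.inr (Or.inr ⟨h1, fun e => h2 (Or.inl e), fun e => h2 (Or.inr e)⟩)
  have hc'i : c' i = B := by
    rcases hc'mem i with h | h | ⟨h1, h2, _⟩
    · exact absurd (h ▸ (hc' i).2) hiA
    · exact h
    · exact absurd ((Finset.disjoint_left.mp (hdisj (c' i) h1 Ci hCiS h2)) (hc' i).2 hiCi) id
  have hc'A : ∀ v ∈ A, c' v = A := by
    intro v hvA
    have hvCi : v ∈ Ci := hAsub hvA
    have hvi : v ≠ i := by intro e; exact hiA (e ▸ hvA)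
    rcases hc'mem v with h | h | ⟨h1, h2, _⟩
    · exact h
    · exfalso
      have := h ▸ (hc' v).2
      rcases Finset.mem_union.mp this with hvD | hvs
      · exact (Finset.disjoint_left.mp hCiD) hvCi hvD
      · exact hvi (Finset.mem_singleton.mp hvs)
    · exact absurd ((Finset.disjoint_left.mp (hdisj (c' v) h1 Ci hCiS h2)) (hc' v).2 hvCi) id
  have hcA : ∀ v ∈ A, c v = Ci := fun v hvA => huniq v Ci hCiS (hAsub hvA)
  have hDS : ∀ v ∈ D, D ∈ S := by
    intro v hvD
    rcases hD with h | h
    · exact h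
    · exact absurd hvD (by simp [h])
  have hcD : ∀ v ∈ D, c v = D := fun v hvD => huniq v D (hDS v hvD) hvD
  have hc'D : ∀ v ∈ D, c' v = B := by
    intro v hvD
    rcases hc'mem v with h | h | ⟨h1, h2, h3⟩
    · exact absurd (hAsub (h ▸ (hc' v).2))
        (fun hvCi => (Finset.disjoint_left.mp hCiD) hvCi hvD)
    · exact h
    · exact absurd ((Finset.disjoint_left.mp (hdisj (c' v) h1 D (hDS v hvD) h3)) (hc' v).2 hvD) id
  have hc'out : ∀ v, v ∉ Ci → v ∉ D → c' v = c v := by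
    intro v hvCi hvD
    rcases hc'mem v with h | h | ⟨h1, _, _⟩
    · exact absurd (hAsub (h ▸ (hc' v).2)) hvCi
    · exfalso
      rcases Finset.mem_union.mp (h ▸ (hc' v).2) with hv | hv
      · exact hvD hv
      · exact hvCi (Finset.mem_singleton.mp hv ▸ hiCi)
    · exact (huniq v (c' v) h1 (hc' v).2).symm
  -- Edge sum change
  have hEpt : ∀ v, (∑ j ∈ c' v, w v j) = (∑ j ∈ c v, w v j)
      + ((if v = i then (∑ j ∈ D, w i j) - ∑ j ∈ A, w i j else 0)
        + (if v ∈ A then -(w v i) else 0) + (if v ∈ D then w v i else 0)) := by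
    intro v
    by_cases hvi : v = i
    · subst hvi
      rw [hc'i, hci]
      have h1 : (∑ j ∈ B, w v j) = (∑ j ∈ D, w v j) + w v v := by
        rw [hBdef, Finset.sum_union (by simpa using hiD)]
        simp
      have h2 : (∑ j ∈ Ci, w v j) = (∑ j ∈ A, w v j) + w v v := by
        rw [Finset.sum_eq_sum_sdiff_singleton_add hiCi]
      rw [h1, h2]
      simp [hiA, hiD]
      ring
    · by_cases hvA : v ∈ A
      · rw [hc'A v hvA, hcA v hvA]
        have hvD : v ∉ D := fun hvD => (Finset.disjoint_left.mp hCiD) (hAsub hvA) hvD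
        have h2 : (∑ j ∈ Ci, w v j) = (∑ j ∈ A, w v j) + w v i := by
          rw [Finset.sum_eq_sum_sdiff_singleton_add hiCi]
        rw [h2]
        simp [hvi, hvA, hvD]
      · by_cases hvD : v ∈ D
        · rw [hc'D v hvD, hcD v hvD]
          have h1 : (∑ j ∈ B, w v j) = (∑ j ∈ D, w v j) + w v i := by
            rw [hBdef, Finset.sum_union (by simpa using hiD)]
            simp
          rw [h1]
          simp [hvi, hvA, hvD]
        · have hvCi : v ∉ Ci := by
            intro hvCi
            exact hvA (Finset.mem_sdiff.mpr ⟨hvCi, by simpa using hvi⟩)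
          rw [hc'out v hvCi hvD]
          simp [hvi, hvA, hvD]
  have hE : (∑ v, ∑ j ∈ c' v, w v j) = (∑ v, ∑ j ∈ c v, w v j)
      + 2 * ((∑ j ∈ D, w i j) - ∑ j ∈ A, w i j) := by
    rw [Finset.sum_congr rfl (fun v _ => hEpt v), Finset.sum_add_distrib]
    congr 1
    rw [Finset.sum_add_distrib, Finset.sum_add_distrib]
    rw [Finset.sum_ite_eq' Finset.univ i, Finset.sum_ite_mem, Finset.sum_ite_mem,
      Finset.univ_inter, Finset.univ_inter]
    have hA' : (∑ v ∈ A, -(w v i)) = -(∑ j ∈ A, w i j) := by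
      rw [← Finset.sum_neg_distrib]
      exact Finset.sum_congr rfl (fun v _ => by rw [hsymm])
    have hD' : (∑ v ∈ D, w v i) = ∑ j ∈ D, w i j :=
      Finset.sum_congr rfl (fun v _ => by rw [hsymm])
    rw [hA', hD']
    simp
    ring
  -- Degree sums
  have hBnotT : B ∉ T := by
    intro h
    rcases Finset.mem_sdiff.mp h with ⟨h1, h2⟩
    simp only [Finset.mem_insert, Finset.mem_singleton] at h2
    exact (Finset.disjoint_left.mp
      (hdisj B h1 Ci hCiS (fun e => h2 (Or.inl e)))) hiB hiCi
  have hAnotT : A ∉ T := by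
    intro h
    rcases Finset.mem_sdiff.mp h with ⟨h1, h2⟩
    simp only [Finset.mem_insert, Finset.mem_singleton] at h2
    obtain ⟨x, hx⟩ := hne A h1
    exact (Finset.disjoint_left.mp
      (hdisj A h1 Ci hCiS (fun e => h2 (Or.inl e)))) hx (hAsub hx)
  have hAneB : A ≠ B := fun e => hiA (e ▸ hiB)
  have hP' : (∑ C ∈ S', ((∑ v ∈ C, δ v) / (2 * W)) ^ 2)
      = ((∑ v ∈ A, δ v) / (2 * W)) ^ 2 + ((∑ v ∈ B, δ v) / (2 * W)) ^ 2
        + ∑ C ∈ T, ((∑ v ∈ C, δ v) / (2 * W)) ^ 2 := by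
    rw [hS']
    rw [Finset.sum_insert (by
      simp only [Finset.mem_insert]
      push_neg
      exact ⟨hAneB, hAnotT⟩), Finset.sum_insert hBnotT]
    ring
  have hPS : (∑ C ∈ S, ((∑ v ∈ C, δ v) / (2 * W)) ^ 2)
      = ((∑ v ∈ Ci, δ v) / (2 * W)) ^ 2 + ((∑ v ∈ D, δ v) / (2 * W)) ^ 2
        + ∑ C ∈ T, ((∑ v ∈ C, δ v) / (2 * W)) ^ 2 := by
    rcases hD with hDS' | hDe
    · have hCineD : Ci ≠ D := fun e => hiD (e ▸ hiCi)
      have hSeq : S = insert Ci (insert D T) := by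
        ext x
        simp only [Finset.mem_insert, hTdef, Finset.mem_sdiff, Finset.mem_insert,
          Finset.mem_singleton]
        constructor
        · intro hx
          by_cases h1 : x = Ci
          · exact Or.inl h1
          by_cases h2 : x = D
          · exact Or.inr (Or.inl h2)
          · exact Or.inr (Or.inr ⟨hx, fun h => h.elim h1 h2⟩)
        · rintro (h | h | ⟨h, _⟩)
          · exact h ▸ hCiS
          · exact h ▸ hDS'
          · exact h
      rw [hSeq, Finset.sum_insert (by
          simp only [Finset.mem_insert]
          push_neg
          refine ⟨hCineD, ?_⟩
          intro h
          exact (Finset.mem_sdiff.mp h).2 (by simp)),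
        Finset.sum_insert (fun h => (Finset.mem_sdiff.mp h).2 (by simp))]
      ring
    · have hTeq : T = S.erase Ci := by
        ext x
        simp only [hTdef, hDe, Finset.mem_sdiff, Finset.mem_insert, Finset.mem_singleton,
          Finset.mem_erase]
        constructor
        · rintro ⟨h1, h2⟩
          exact ⟨fun e => h2 (Or.inl e), h1⟩
        · rintro ⟨h1, h2⟩
          refine ⟨h2, ?_⟩
          rintro (e | e)
          · exact h1 e
          · obtain ⟨x', hx'⟩ := hne x h2
            exact absurd hx' (by simp [e])
      rw [hTeq, hDe]
      simp only [Finset.sum_empty]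
      rw [← Finset.sum_erase_add S _ hCiS]
      ring
  have hCideg : (∑ v ∈ Ci, δ v) = (∑ v ∈ A, δ v) + δ i :=
    Finset.sum_eq_sum_sdiff_singleton_add hiCi δ
  have hBdeg : (∑ v ∈ B, δ v) = (∑ v ∈ D, δ v) + δ i := by
    rw [hBdef, Finset.sum_union (by simpa using hiD)]
    simp
  -- Put everything together
  rw [hE, hP', hPS, hCideg, hBdeg]
  set eD := (∑ j ∈ D, w i j)
  set eC := (∑ j ∈ A, w i j)
  set a := (∑ v ∈ A, δ v)
  set d := (∑ v ∈ D, δ v)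
  set k := δ i
  have hW2 : (2 : ℝ) * W ≠ 0 := by positivity
  have hkey : (a / (2 * W)) ^ 2 + ((d + k) / (2 * W)) ^ 2
      - ((a + k) / (2 * W)) ^ 2 - (d / (2 * W)) ^ 2 = k * (d - a) / (2 * W ^ 2) := by
    field_simp
    ring
  have h1 : (1 / (2 * W)) * ((∑ v, ∑ j ∈ c v, w v j) + 2 * (eD - eC))
      = (1 / (2 * W)) * (∑ v, ∑ j ∈ c v, w v j) + (eD - eC) / W := by
    field_simp
  have h2 : k * ((a - d)) / (2 * W ^ 2) = -(k * (d - a) / (2 * W ^ 2)) := by ring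
  rw [h1]
  rw [h2] at hgain
  linarith [hkey, hgain]
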